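/- Let $f \in L^2(\mathbb{R}^d)$, $n > k$ integers, $df_n = E_n f - E_{n-1} f$ the dyadic martingale difference at scale $2^{-n}$, and $M_k$ the averaging operator over the ball $B_k$ of radius $2^{-k}$. Then $\|M_k (df_n)\|_{L^2}^2 \leq C_d\, 2^{k-n} \|df_n\|_{L^2}^2$, with $C_d$ depending only on $d$. -/

import Mathlib

open MeasureTheory Metric Set
open scoped ENNReal

def dyadicCubeOf (d : ℕ) (n : ℤ) (x : EuclideanSpace ℝ (Fin d)) :
    Set (EuclideanSpace ℝ (Fin d)) :=
  {y | ∀ i, ⌊(2:ℝ) ^ n * y i⌋ = ⌊(2:ℝ) ^ n * x i⌋}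

noncomputable def dyadicCondExp (d : ℕ) (n : ℤ) (f : EuclideanSpace ℝ (Fin d) → ℝ)
    (x : EuclideanSpace ℝ (Fin d)) : ℝ :=
  ⨍ y in dyadicCubeOf d n x, f y

noncomputable def dyadicDiff (d : ℕ) (n : ℤ) (f : EuclideanSpace ℝ (Fin d) → ℝ)
    (x : EuclideanSpace ℝ (Fin d)) : ℝ :=
  dyadicCondExp d n f x - dyadicCondExp d (n - 1) f x

def dcube (d : ℕ) (j : ℤ) (m : Fin d → ℤ) : Set (EuclideanSpace ℝ (Fin d)) :=
  {y | ∀ i, ⌊(2:ℝ) ^ j * y i⌋ = m i}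



lemma measurable_coord (d : ℕ) (i : Fin d) :
    Measurable (fun y : EuclideanSpace ℝ (Fin d) => y i) :=
  (measurable_pi_apply i).comp (MeasurableEquiv.toLp 2 (Fin d → ℝ)).symm.measurable

lemma mem_dcube_iff {d : ℕ} {j : ℤ} {m : Fin d → ℤ} {y : EuclideanSpace ℝ (Fin d)} :
    y ∈ dcube d j m ↔ ∀ i, y i ∈ Ico ((m i : ℝ) * (2:ℝ)^(-j)) ((m i + 1 : ℝ) * (2:ℝ)^(-j)) := by
  have h2 : (0:ℝ) < (2:ℝ)^j := by positivity
  unfold dcube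
  simp only [Set.mem_setOf_eq, Int.floor_eq_iff, mem_Ico, zpow_neg, ← div_eq_mul_inv,
    div_le_iff₀ h2, lt_div_iff₀ h2]
  constructor <;> intro h i <;>
    exact ⟨by push_cast; nlinarith [(h i).1], by push_cast [(h i).2] at *; nlinarith [(h i).2]⟩

lemma measurableSet_dcube (d : ℕ) (j : ℤ) (m : Fin d → ℤ) :
    MeasurableSet (dcube d j m) := by
  have : dcube d j m = ⋂ i, (fun y : EuclideanSpace ℝ (Fin d) => ⌊(2:ℝ)^j * y i⌋) ⁻¹' {m i} := by
    ext y; simp [dcube]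
  rw [this]
  exact MeasurableSet.iInter fun i =>
    (Int.measurable_floor.comp (measurable_const.mul (measurable_coord d i))) (by simp)

lemma dcube_disjoint {d : ℕ} {j : ℤ} : Pairwise (Function.onFun Disjoint (dcube d j)) := by
  intro m m' hmm
  simp only [Function.onFun, Set.disjoint_left]
  intro y hy hy'
  exact hmm (funext fun i => (hy i).symm.trans (hy' i))

lemma iUnion_dcube {d : ℕ} {j : ℤ} : (⋃ m, dcube d j m) = univ := by
  ext y
  simp only [mem_iUnion, mem_univ, iff_true]
  exact ⟨fun i => ⌊(2:ℝ)^j * y i⌋, fun i => rfl⟩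

lemma volume_dcube (d : ℕ) (j : ℤ) (m : Fin d → ℤ) :
    volume (dcube d j m) = (ENNReal.ofReal ((2:ℝ)^(-j))) ^ d := by
  have he : dcube d j m = (MeasurableEquiv.toLp 2 (Fin d → ℝ)).symm ⁻¹'
      Set.pi univ (fun i => Ico ((m i : ℝ) * (2:ℝ)^(-j)) ((m i + 1 : ℝ) * (2:ℝ)^(-j))) := by
    ext y
    rw [mem_dcube_iff]
    simp only [mem_preimage, Set.mem_pi, mem_univ, forall_true_left]
    rfl
  rw [he, (EuclideanSpace.volume_preserving_symm_measurableEquiv_toLp (Fin d)).measure_preimage]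
  · rw [volume_pi_pi]
    have : ∀ i : Fin d, volume (Ico ((m i : ℝ) * (2:ℝ)^(-j)) ((m i + 1 : ℝ) * (2:ℝ)^(-j)))
        = ENNReal.ofReal ((2:ℝ)^(-j)) := by
      intro i; rw [Real.volume_Ico]; ring_nf
    simp only [this, Finset.prod_const, Finset.card_univ, Fintype.card_fin]
  · exact (MeasurableSet.univ_pi fun i => measurableSet_Ico).nullMeasurableSet

lemma dist_le_of_mem_dcube {d : ℕ} {j : ℤ} {m : Fin d → ℤ} {y z : EuclideanSpace ℝ (Fin d)}
    (hy : y ∈ dcube d j m) (hz : z ∈ dcube d j m) :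
    dist y z ≤ Real.sqrt d * (2:ℝ)^(-j) := by
  rw [EuclideanSpace.dist_eq]
  have hb : ∀ i, dist (y i) (z i) ^ 2 ≤ ((2:ℝ)^(-j))^2 := by
    intro i
    have h1 := mem_dcube_iff.1 hy i
    have h2 := mem_dcube_iff.1 hz i
    have : |y i - z i| ≤ (2:ℝ)^(-j) := by
      rw [abs_le]
      simp only [mem_Ico] at h1 h2
      constructor <;> nlinarith [h1.1, h1.2, h2.1, h2.2]
    calc dist (y i) (z i) ^ 2 = |y i - z i| ^ 2 := by rw [Real.dist_eq]
      _ ≤ ((2:ℝ)^(-j))^2 := by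
          apply sq_le_sq' <;> nlinarith [abs_nonneg (y i - z i), this]
  calc Real.sqrt (∑ i, dist (y i) (z i) ^ 2) ≤ Real.sqrt (d * ((2:ℝ)^(-j))^2) := by
        apply Real.sqrt_le_sqrt
        calc (∑ i, dist (y i) (z i) ^ 2) ≤ ∑ _i : Fin d, ((2:ℝ)^(-j))^2 :=
              Finset.sum_le_sum fun i _ => hb i
          _ = d * ((2:ℝ)^(-j))^2 := by simp [Finset.sum_const, nsmul_eq_mul]
    _ = Real.sqrt d * (2:ℝ)^(-j) := by
        rw [Real.sqrt_mul (Nat.cast_nonneg d), Real.sqrt_sq (by positivity)]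


lemma dyadicCubeOf_eq_dcube {d : ℕ} {n : ℤ} {x : EuclideanSpace ℝ (Fin d)} :
    dyadicCubeOf d n x = dcube d n (fun i => ⌊(2:ℝ)^n * x i⌋) := rfl

lemma dyadicCubeOf_eq_of_mem_dcube {d : ℕ} {n : ℤ} {m : Fin d → ℤ}
    {x : EuclideanSpace ℝ (Fin d)} (hx : x ∈ dcube d n m) :
    dyadicCubeOf d n x = dcube d n m := by
  have h : (fun i => ⌊(2:ℝ)^n * x i⌋) = m := funext hx
  rw [dyadicCubeOf_eq_dcube, h]

lemma measurable_dyadicCondExp (d : ℕ) (n : ℤ) (f : EuclideanSpace ℝ (Fin d) → ℝ) :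
    Measurable (dyadicCondExp d n f) := by
  have : dyadicCondExp d n f =
      (fun m : Fin d → ℤ => ⨍ y in dcube d n m, f y) ∘
        (fun x : EuclideanSpace ℝ (Fin d) => fun i => ⌊(2:ℝ)^n * x i⌋) := rfl
  rw [this]
  exact (measurable_of_countable _).comp
    (measurable_pi_lambda _ fun i =>
      Int.measurable_floor.comp (measurable_const.mul (measurable_coord d i)))

/-- halving of a dyadic cube -/
lemma dcube_halves {d : ℕ} {n : ℤ} (m : Fin d → ℤ) :
    dcube d (n-1) m = ⋃ b : Fin d → Bool,
      dcube d n (fun i => 2 * m i + (if b i then 1 else 0)) := by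
  have key : ∀ (a : ℝ) (q : ℤ), (⌊a⌋ = q ↔ (⌊2*a⌋ = 2*q ∨ ⌊2*a⌋ = 2*q+1)) := by
    intro a q
    rw [Int.floor_eq_iff, Int.floor_eq_iff, Int.floor_eq_iff]
    push_cast
    constructor
    · rintro ⟨h1, h2⟩
      rcases lt_or_ge a (q + 1/2) with h | h
      · left; constructor <;> linarith
      · right; constructor <;> linarith
    · rintro (⟨h1, h2⟩ | ⟨h1, h2⟩) <;> constructor <;> linarith
  ext y
  simp only [mem_iUnion, dcube, Set.mem_setOf_eq]
  have hsc : ∀ i, (2:ℝ)^n * y i = 2 * ((2:ℝ)^(n-1) * y i) := by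
    intro i
    rw [← mul_assoc]
    congr 1
    rw [← zpow_one_add₀ (two_ne_zero)]
    congr 1
    ring
  constructor
  · intro h
    refine ⟨fun i => decide (⌊(2:ℝ)^n * y i⌋ = 2 * m i + 1), fun i => ?_⟩
    have := (key ((2:ℝ)^(n-1) * y i) (m i)).1 (h i)
    rw [← hsc i] at this
    rcases this with h' | h'
    · simp [h']
    · simp [h']
  · rintro ⟨b, hb⟩ i
    apply (key ((2:ℝ)^(n-1) * y i) (m i)).2
    rw [← hsc i]
    rcases hb i with h'
    by_cases hbi : b i
    · right; simpa [hbi] using h'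
    · left; simpa [hbi] using h'
section cube
variable {d : ℕ} {j n : ℤ} {m : Fin d → ℤ} {f : EuclideanSpace ℝ (Fin d) → ℝ}


lemma volume_dcube_lt_top : volume (dcube d j m) < ∞ := by
  rw [volume_dcube]; exact ENNReal.pow_lt_top ENNReal.ofReal_lt_top

lemma volume_dcube_toReal_pos : 0 < (volume (dcube d j m)).toReal := by
  rw [volume_dcube]
  rw [← ENNReal.ofReal_pow (by positivity)]
  rw [ENNReal.toReal_ofReal (by positivity)]
  positivity

lemma integrableOn_of_memL2 (hf : MemLp f 2 volume) {s : Set (EuclideanSpace ℝ (Fin d))}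
    (hs : volume s < ∞) : IntegrableOn f s volume := by
  haveI : Fact (volume s < ∞) := ⟨hs⟩
  exact (hf.restrict s).integrable (by norm_num)

lemma condexp_eqOn : EqOn (dyadicCondExp d n f) (fun _ => ⨍ y in dcube d n m, f y)
    (dcube d n m) := by
  intro y hy
  simp only [dyadicCondExp, dyadicCubeOf_eq_of_mem_dcube hy]

lemma integrableOn_condexp_self :
    IntegrableOn (dyadicCondExp d n f) (dcube d n m) volume :=
  (integrableOn_const volume_dcube_lt_top.ne).congr_fun
    condexp_eqOn.symm (measurableSet_dcube _ _ _)

lemma integral_dcube_condexp_self (hf : MemLp f 2 volume) :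
    ∫ y in dcube d n m, dyadicCondExp d n f y = ∫ y in dcube d n m, f y := by
  rw [setIntegral_congr_fun (measurableSet_dcube _ _ _) condexp_eqOn]
  rw [setIntegral_const, setAverage_eq, smul_smul, mul_inv_cancel₀ (a := volume.real (dcube d n m)) volume_dcube_toReal_pos.ne',
    one_smul]

lemma integrableOn_condexp_halves :
    IntegrableOn (dyadicCondExp d n f) (dcube d (n-1) m) volume := by
  rw [dcube_halves m, ← Set.biUnion_univ, ← Finset.coe_univ, Finset.set_biUnion_coe]
  rw [integrableOn_finset_iUnion]
  exact fun b _ => integrableOn_condexp_self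

lemma integral_dcube_condexp_halves (hf : MemLp f 2 volume) :
    ∫ y in dcube d (n-1) m, dyadicCondExp d n f y = ∫ y in dcube d (n-1) m, f y := by
  have hdisj : Pairwise (Function.onFun Disjoint
      (fun b : Fin d → Bool => dcube d n (fun i => 2 * m i + (if b i then 1 else 0)))) := by
    intro b b' hbb
    apply dcube_disjoint
    intro hEq
    apply hbb
    funext i
    have := congrFun hEq i
    by_cases h1 : b i <;> by_cases h2 : b' i <;> simp [h1, h2] at this ⊢ <;> omega
  have hvol : volume (dcube d (n-1) m) < ∞ := volume_dcube_lt_top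
  rw [dcube_halves m]
  rw [integral_iUnion (fun b => measurableSet_dcube _ _ _) hdisj
    (by rw [← dcube_halves m]; exact integrableOn_condexp_halves),
    integral_iUnion (fun b => measurableSet_dcube _ _ _) hdisj
    (by rw [← dcube_halves m]; exact integrableOn_of_memL2 hf hvol)]
  congr 1
  funext b
  exact integral_dcube_condexp_self hf

lemma integral_dcube_dyadicDiff_zero (hf : MemLp f 2 volume) :
    ∫ y in dcube d (n-1) m, dyadicDiff d n f y = 0 := by
  have h1 : IntegrableOn (dyadicCondExp d n f) (dcube d (n-1) m) volume :=
    integrableOn_condexp_halves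
  have h2 : IntegrableOn (dyadicCondExp d (n-1) f) (dcube d (n-1) m) volume :=
    integrableOn_condexp_self
  have : ∫ y in dcube d (n-1) m, dyadicDiff d n f y
      = (∫ y in dcube d (n-1) m, dyadicCondExp d n f y)
        - ∫ y in dcube d (n-1) m, dyadicCondExp d (n-1) f y := by
    unfold dyadicDiff
    exact integral_sub h1 h2
  rw [this, integral_dcube_condexp_halves hf, integral_dcube_condexp_self hf, sub_self]

end cube

section stepA
variable {d : ℕ} {j : ℤ} {g : EuclideanSpace ℝ (Fin d) → ℝ}

set_option maxHeartbeats 2000000 in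
lemma abs_integral_ball_le (hg2 : MemLp g 2 volume)
    (hmean : ∀ m : Fin d → ℤ, ∫ y in dcube d j m, g y = 0)
    {δ : ℝ}
    (hδ : ∀ (m : Fin d → ℤ) (y z : EuclideanSpace ℝ (Fin d)),
      y ∈ dcube d j m → z ∈ dcube d j m → dist y z ≤ δ)
    (r : ℝ) (x : EuclideanSpace ℝ (Fin d)) :
    |∫ y in ball x r, g y| ≤
      ∫ y in closedBall x (r+δ) \ ball x (r-δ), |g y| := by
  set A := closedBall x (r+δ) \ ball x (r-δ) with hA
  have hAm : MeasurableSet A := measurableSet_closedBall.diff measurableSet_ball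
  have hgA : IntegrableOn g A volume :=
    integrableOn_of_memL2 hg2 (lt_of_le_of_lt (measure_mono diff_subset)
      measure_closedBall_lt_top)
  have hgB : IntegrableOn g (ball x r) volume :=
    integrableOn_of_memL2 hg2 measure_ball_lt_top
  have hBeq : ball x r = ⋃ m, dcube d j m ∩ ball x r := by
    rw [← Set.iUnion_inter, iUnion_dcube, univ_inter]
  have hAeq : A = ⋃ m, dcube d j m ∩ A := by
    rw [← Set.iUnion_inter, iUnion_dcube, univ_inter]
  have hdisjB : Pairwise (Function.onFun Disjoint
      (fun m : Fin d → ℤ => dcube d j m ∩ ball x r)) := fun m m' hmm =>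
    ((dcube_disjoint hmm).mono inter_subset_left inter_subset_left)
  have hdisjA : Pairwise (Function.onFun Disjoint
      (fun m : Fin d → ℤ => dcube d j m ∩ A)) := fun m m' hmm =>
    ((dcube_disjoint hmm).mono inter_subset_left inter_subset_left)
  have hsum1 : HasSum (fun m : Fin d → ℤ => ∫ y in dcube d j m ∩ ball x r, g y)
      (∫ y in ball x r, g y) := by
    have h := hasSum_integral_iUnion (s := fun m : Fin d → ℤ => dcube d j m ∩ ball x r)
      (μ := volume) (f := g)
      (fun m => (measurableSet_dcube d j m).inter measurableSet_ball) hdisjB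
      (by rw [← hBeq]; exact hgB)
    rwa [← hBeq] at h
  have hsum2 : HasSum (fun m : Fin d → ℤ => ∫ y in dcube d j m ∩ A, |g y|)
      (∫ y in A, |g y|) := by
    have h := hasSum_integral_iUnion (s := fun m : Fin d → ℤ => dcube d j m ∩ A)
      (μ := volume) (f := fun y => |g y|)
      (fun m => (measurableSet_dcube d j m).inter hAm) hdisjA
      (by rw [← hAeq]; exact hgA.abs)
    rwa [← hAeq] at h
  have hterm : ∀ m : Fin d → ℤ,
      |∫ y in dcube d j m ∩ ball x r, g y| ≤ ∫ y in dcube d j m ∩ A, |g y| := by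
    intro m
    have hrhs0 : 0 ≤ ∫ y in dcube d j m ∩ A, |g y| :=
      setIntegral_nonneg ((measurableSet_dcube d j m).inter hAm) (fun y _ => abs_nonneg _)
    by_cases hsub : dcube d j m ⊆ ball x r
    · rw [inter_eq_left.2 hsub, hmean m]
      simpa using hrhs0
    by_cases hdis : dcube d j m ∩ ball x r = ∅
    · rw [hdis]
      simpa using hrhs0
    · obtain ⟨p, hp⟩ := nonempty_iff_ne_empty.2 hdis
      obtain ⟨q, hq, hq'⟩ := not_subset.1 hsub
      have hcubeA : dcube d j m ⊆ A := by
        intro y hy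
        constructor
        · rw [mem_closedBall]
          calc dist y x ≤ dist y p + dist p x := dist_triangle _ _ _
            _ ≤ δ + r := add_le_add (hδ m y p hy hp.1) (le_of_lt (mem_ball.1 hp.2))
            _ = r + δ := by ring
        · rw [mem_ball]
          push_neg
          have h1 : r ≤ dist q x := by
            by_contra h
            exact hq' (mem_ball.2 (lt_of_not_ge h))
          calc r - δ ≤ dist q x - dist q y := by
                have := hδ m q y hq hy
                linarith
            _ ≤ dist y x := by
                have := dist_triangle q y x
                linarith
      calc |∫ y in dcube d j m ∩ ball x r, g y| ≤ ∫ y in dcube d j m ∩ ball x r, |g y| := by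
            simpa [Real.norm_eq_abs] using
              norm_integral_le_integral_norm (μ := volume.restrict (dcube d j m ∩ ball x r)) g
        _ ≤ ∫ y in dcube d j m ∩ A, |g y| := by
            apply setIntegral_mono_set (IntegrableOn.mono_set hgA.abs inter_subset_right)
            · exact Filter.Eventually.of_forall fun y => abs_nonneg _
            · exact HasSubset.Subset.eventuallyLE fun y hy => ⟨hy.1, hcubeA hy.1⟩
  have hsummable : Summable (fun m : Fin d → ℤ => ∫ y in dcube d j m ∩ ball x r, g y) :=
    hsum1.summable
  have hsummable_abs : Summable (fun m : Fin d → ℤ => |∫ y in dcube d j m ∩ ball x r, g y|) :=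
    Summable.of_nonneg_of_le (fun m => abs_nonneg _) hterm hsum2.summable
  calc |∫ y in ball x r, g y| = |∑' m, ∫ y in dcube d j m ∩ ball x r, g y| := by
        rw [hsum1.tsum_eq]
    _ ≤ ∑' m, |∫ y in dcube d j m ∩ ball x r, g y| := by
        have := norm_tsum_le_tsum_norm
          (f := fun m : Fin d → ℤ => ∫ y in dcube d j m ∩ ball x r, g y)
          (by simpa [Real.norm_eq_abs] using hsummable_abs)
        simpa [Real.norm_eq_abs] using this
    _ ≤ ∑' m, ∫ y in dcube d j m ∩ A, |g y| :=
        Summable.tsum_le_tsum hterm hsummable_abs hsum2.summable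
    _ = ∫ y in A, |g y| := hsum2.tsum_eq

end stepA

noncomputable def ballAvg (d : ℕ) (k : ℤ) (g : EuclideanSpace ℝ (Fin d) → ℝ)
    (x : EuclideanSpace ℝ (Fin d)) : ℝ :=
  ⨍ y in Metric.ball x ((2:ℝ) ^ (-k)), g y


/-- `a^d - b^d ≤ d * (a-b) * a^(d-1)` for `0 ≤ b ≤ a`. -/
lemma pow_sub_pow_le_real {a b : ℝ} (hb : 0 ≤ b) (hab : b ≤ a) (d : ℕ) :
    a^d - b^d ≤ d * (a-b) * a^(d-1) := by
  have ha : 0 ≤ a := hb.trans hab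
  have hgs := geom_sum₂_mul a b d
  have hsum : (∑ i ∈ Finset.range d, a ^ i * b ^ (d - 1 - i)) ≤ d * a^(d-1) := by
    calc (∑ i ∈ Finset.range d, a ^ i * b ^ (d - 1 - i))
        ≤ ∑ i ∈ Finset.range d, a^(d-1) := by
          apply Finset.sum_le_sum
          intro i hi
          have hi' : i < d := Finset.mem_range.1 hi
          calc a ^ i * b ^ (d - 1 - i) ≤ a ^ i * a ^ (d - 1 - i) := by
                apply mul_le_mul_of_nonneg_left (pow_le_pow_left₀ hb hab _) (pow_nonneg ha _)
            _ = a ^ (i + (d - 1 - i)) := (pow_add a i (d-1-i)).symm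
            _ = a ^ (d-1) := by congr 1; omega
      _ = d * a^(d-1) := by simp [Finset.sum_const, nsmul_eq_mul]
  calc a^d - b^d = (∑ i ∈ Finset.range d, a ^ i * b ^ (d - 1 - i)) * (a - b) := hgs.symm
    _ ≤ (d * a^(d-1)) * (a - b) := mul_le_mul_of_nonneg_right hsum (by linarith)
    _ = d * (a-b) * a^(d-1) := by ring

lemma eLpNorm_two_sq {α : Type*} [MeasurableSpace α] (μ : Measure α) (u : α → ℝ) :
    eLpNorm u 2 μ ^ 2 = ∫⁻ x, ((‖u x‖₊ : ℝ≥0∞))^2 ∂μ := by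
  rw [eLpNorm_eq_lintegral_rpow_enorm_toReal two_ne_zero ENNReal.ofNat_ne_top]
  have h2 : (2:ℝ≥0∞).toReal = (2:ℝ) := by simp
  rw [h2]
  rw [← ENNReal.rpow_natCast _ 2, ← ENNReal.rpow_mul]
  norm_num [ENNReal.rpow_two]
  rfl

/-- For `n > k`, `‖M_k(df_n)‖₂² ≤ C_d 2^{k-n} ‖df_n‖₂²`. -/
theorem ballAvg_martingale_diff_off_diagonal (d : ℕ) :
    ∃ C : ℝ, 0 < C ∧ ∀ (f : EuclideanSpace ℝ (Fin d) → ℝ), MemLp f 2 volume →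
      ∀ (n k : ℤ), k < n →
      eLpNorm (fun x => ballAvg d k (dyadicDiff d n f) x) 2 volume ^ 2
        ≤ ENNReal.ofReal (C * (2:ℝ) ^ (k - n)) *
            eLpNorm (dyadicDiff d n f) 2 volume ^ 2 := by
  set C₀ : ℝ := 4 * d * Real.sqrt d * (1 + Real.sqrt d)^(d-1) with hC₀
  refine ⟨max 1 (C₀^2), lt_of_lt_of_le one_pos (le_max_left _ _), ?_⟩
  intro f hf n k hkn
  have hCpos : 0 < max 1 (C₀^2) * (2:ℝ)^(k-n) := by positivity
  rcases Nat.eq_zero_or_pos d with hd0 | hd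
  · subst hd0
    have hcube : ∀ (j : ℤ) (x : EuclideanSpace ℝ (Fin 0)), dyadicCubeOf 0 j x = univ :=
      fun j x => eq_univ_of_forall fun y i => i.elim0
    have hdd : dyadicDiff 0 n f = fun _ => 0 := by
      funext x
      simp [dyadicDiff, dyadicCondExp, hcube]
    have hL : eLpNorm (fun x => ballAvg 0 k (dyadicDiff 0 n f) x) 2 volume = 0 := by
      simp only [hdd]
      have : (fun x : EuclideanSpace ℝ (Fin 0) => ballAvg 0 k (fun _ => (0:ℝ)) x)
          = fun _ => (0:ℝ) := by
        funext x
        simp [ballAvg]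
      rw [this]
      exact eLpNorm_zero'
    rw [hL]
    simp only [ne_eq, OfNat.ofNat_ne_zero, not_false_eq_true, zero_pow]
    exact bot_le
  · -- main case
    set g : EuclideanSpace ℝ (Fin d) → ℝ := dyadicDiff d n f with hgdef
    have hgmeas : Measurable g :=
      (measurable_dyadicCondExp d n f).sub (measurable_dyadicCondExp d (n-1) f)
    by_cases hfin : eLpNorm g 2 volume = ⊤
    · rw [hfin]
      have htop : ENNReal.ofReal (max 1 (C₀^2) * (2:ℝ)^(k-n)) * ⊤^2 = ⊤ := by
        rw [ENNReal.top_pow (by norm_num)]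
        exact ENNReal.mul_top (by simp [ENNReal.ofReal_eq_zero, not_le, hCpos]; positivity)
      rw [htop]
      exact le_top
    have hg2 : MemLp g 2 volume := ⟨hgmeas.aestronglyMeasurable, lt_top_iff_ne_top.2 hfin⟩
    haveI : Nontrivial (EuclideanSpace ℝ (Fin d)) := by
      have h1 : (EuclideanSpace.single (⟨0, hd⟩ : Fin d) (1:ℝ)) ⟨0, hd⟩ = 1 := by
        simp [EuclideanSpace.single_apply]
      refine nontrivial_of_ne (EuclideanSpace.single (⟨0, hd⟩ : Fin d) (1:ℝ)) 0 fun h => ?_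
      rw [h] at h1
      simp at h1
    set r : ℝ := (2:ℝ)^(-k) with hrdef
    set δ : ℝ := Real.sqrt d * (2:ℝ)^(-(n-1)) with hδdef
    have hrpos : 0 < r := by positivity
    have hδ0 : 0 ≤ δ := by positivity
    have hδr : δ ≤ Real.sqrt d * r := by
      apply mul_le_mul_of_nonneg_left _ (Real.sqrt_nonneg _)
      apply zpow_le_zpow_right₀ one_le_two
      omega
    set A : EuclideanSpace ℝ (Fin d) → Set (EuclideanSpace ℝ (Fin d)) :=
      fun x => closedBall x (r+δ) \ ball x (r-δ) with hAdef
    have hAmeas : ∀ x, MeasurableSet (A x) :=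
      fun x => measurableSet_closedBall.diff measurableSet_ball
    have hgintA : ∀ x, IntegrableOn g (A x) volume := fun x =>
      integrableOn_of_memL2 hg2
        (lt_of_le_of_lt (measure_mono diff_subset) measure_closedBall_lt_top)
    have stepA : ∀ x, |∫ y in ball x r, g y| ≤ ∫ y in A x, |g y| := by
      intro x
      exact abs_integral_ball_le hg2 (fun m => integral_dcube_dyadicDiff_zero hf)
        (fun m y z hy hz => dist_le_of_mem_dcube hy hz) r x
    set NB : ℝ≥0∞ := volume (ball (0 : EuclideanSpace ℝ (Fin d)) r) with hNBdef
    have hNBx : ∀ x : EuclideanSpace ℝ (Fin d), volume (ball x r) = NB :=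
      fun x => Measure.addHaar_ball_center volume x r
    have hNB0 : NB ≠ 0 := (measure_ball_pos volume 0 hrpos).ne'
    have hNBtop : NB ≠ ⊤ := measure_ball_lt_top.ne
    have hsubcb : ∀ z : EuclideanSpace ℝ (Fin d), ball z (r-δ) ⊆ closedBall z (r+δ) :=
      fun z => ball_subset_closedBall.trans (closedBall_subset_closedBall (by linarith))
    have hAvol : ∀ z : EuclideanSpace ℝ (Fin d), volume (A z)
        = volume (closedBall (0 : EuclideanSpace ℝ (Fin d)) (r+δ))
          - volume (ball (0 : EuclideanSpace ℝ (Fin d)) (r-δ)) := by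
      intro z
      rw [show A z = closedBall z (r+δ) \ ball z (r-δ) from rfl]
      rw [measure_diff (hsubcb z) measurableSet_ball.nullMeasurableSet measure_ball_lt_top.ne,
        Measure.addHaar_closedBall_center, Measure.addHaar_ball_center]
    set NA : ℝ≥0∞ := volume (A 0) with hNAdef
    have hNAx : ∀ x, volume (A x) = NA := fun x => by rw [hAvol x, ← hAvol 0]
    have hNAtop : NA ≠ ⊤ :=
      (lt_of_le_of_lt (measure_mono diff_subset) measure_closedBall_lt_top).ne
    -- pointwise bound 1
    have hb1 : ∀ x, ((‖ballAvg d k g x‖₊ : ℝ≥0∞)) ≤ NB⁻¹ * ∫⁻ y in A x, (‖g y‖₊ : ℝ≥0∞) ∂volume := by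
      intro x
      have havg : ballAvg d k g x = (volume (ball x r)).toReal⁻¹ • ∫ y in ball x r, g y :=
        setAverage_eq volume g (ball x r)
      have hofr : ((‖ballAvg d k g x‖₊ : ℝ≥0∞)) = ENNReal.ofReal |ballAvg d k g x| := by
        rw [← Real.norm_eq_abs]; exact (ofReal_norm_eq_enorm _).symm
      rw [hofr, havg, smul_eq_mul, abs_mul, abs_inv,
        abs_of_nonneg (ENNReal.toReal_nonneg), ENNReal.ofReal_mul (by positivity)]
      have htoRpos : 0 < NB.toReal := ENNReal.toReal_pos hNB0 hNBtop
      apply mul_le_mul'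
      · rw [hNBx x]
        exact le_of_eq (by rw [ENNReal.ofReal_inv_of_pos htoRpos, ENNReal.ofReal_toReal hNBtop])
      · calc ENNReal.ofReal |∫ y in ball x r, g y|
            ≤ ENNReal.ofReal (∫ y in A x, |g y|) := ENNReal.ofReal_le_ofReal (stepA x)
          _ = ∫⁻ y in A x, (‖g y‖₊ : ℝ≥0∞) ∂volume := by
              exact ofReal_integral_norm_eq_lintegral_enorm (hgintA x)
    -- pointwise bound 2 (Cauchy-Schwarz)
    have hb2 : ∀ x, (∫⁻ y in A x, (‖g y‖₊:ℝ≥0∞) ∂volume)^2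
        ≤ NA * ∫⁻ y in A x, (‖g y‖₊:ℝ≥0∞)^2 ∂volume := by
      intro x
      have hconj : Real.HolderConjugate 2 2 := Real.HolderConjugate.two_two
      have hH := ENNReal.lintegral_mul_le_Lp_mul_Lq (volume.restrict (A x)) hconj
        (f := fun y => (‖g y‖₊:ℝ≥0∞)) (g := fun _ => 1)
        (hgmeas.nnnorm.coe_nnreal_ennreal.aemeasurable) aemeasurable_const
      simp only [Pi.mul_apply, mul_one] at hH
      have hsq : ∀ X : ℝ≥0∞, (X ^ (1/(2:ℝ)))^(2:ℕ) = X := by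
        intro X
        rw [← ENNReal.rpow_natCast (X ^ (1/(2:ℝ))) 2, ← ENNReal.rpow_mul]
        norm_num
      have hone : (∫⁻ _y in A x, (1:ℝ≥0∞) ^ (2:ℝ) ∂volume) = volume (A x) := by simp
      have hr2 : ∀ y, ((‖g y‖₊:ℝ≥0∞))^(2:ℝ) = ((‖g y‖₊:ℝ≥0∞))^(2:ℕ) :=
        fun y => ENNReal.rpow_two _
      calc (∫⁻ y in A x, (‖g y‖₊:ℝ≥0∞) ∂volume)^2
          ≤ ((∫⁻ y in A x, ((‖g y‖₊:ℝ≥0∞))^(2:ℝ) ∂volume)^(1/(2:ℝ))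
              * (∫⁻ _y in A x, (1:ℝ≥0∞)^(2:ℝ) ∂volume)^(1/(2:ℝ)))^(2:ℕ) :=
            pow_le_pow_left' hH 2
        _ = (∫⁻ y in A x, ((‖g y‖₊:ℝ≥0∞))^(2:ℝ) ∂volume) * volume (A x) := by
            rw [mul_pow, hsq, hsq, hone]
        _ = NA * ∫⁻ y in A x, ((‖g y‖₊:ℝ≥0∞))^(2:ℕ) ∂volume := by
            rw [hNAx x, mul_comm]
            simp only [hr2]
    -- combine pointwise
    have hpt : ∀ x, ((‖ballAvg d k g x‖₊ : ℝ≥0∞))^2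
        ≤ NB⁻¹^2 * NA * ∫⁻ y in A x, ((‖g y‖₊:ℝ≥0∞))^2 ∂volume := by
      intro x
      calc ((‖ballAvg d k g x‖₊ : ℝ≥0∞))^2
          ≤ (NB⁻¹ * ∫⁻ y in A x, (‖g y‖₊:ℝ≥0∞) ∂volume)^2 := pow_le_pow_left' (hb1 x) 2
        _ = NB⁻¹^2 * (∫⁻ y in A x, (‖g y‖₊:ℝ≥0∞) ∂volume)^2 := mul_pow _ _ _
        _ ≤ NB⁻¹^2 * (NA * ∫⁻ y in A x, ((‖g y‖₊:ℝ≥0∞))^2 ∂volume) :=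
            mul_le_mul_right (hb2 x) _
        _ = NB⁻¹^2 * NA * ∫⁻ y in A x, ((‖g y‖₊:ℝ≥0∞))^2 ∂volume := (mul_assoc _ _ _).symm
    -- Tonelli / symmetry
    have hswap : ∫⁻ x, ∫⁻ y in A x, ((‖g y‖₊:ℝ≥0∞))^2 ∂volume ∂volume
        = NA * ∫⁻ y, ((‖g y‖₊:ℝ≥0∞))^2 ∂volume := by
      set S : Set (EuclideanSpace ℝ (Fin d) × EuclideanSpace ℝ (Fin d)) :=
        {q | dist q.2 q.1 ≤ r + δ ∧ ¬ dist q.2 q.1 < r - δ} with hSdef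
      set F : EuclideanSpace ℝ (Fin d) × EuclideanSpace ℝ (Fin d) → ℝ≥0∞ :=
        Set.indicator S (fun q => ((‖g q.2‖₊:ℝ≥0∞))^2) with hFdef
      have hdistm : Measurable fun q : EuclideanSpace ℝ (Fin d) × EuclideanSpace ℝ (Fin d) =>
          dist q.2 q.1 :=
        (continuous_dist.comp (continuous_snd.prodMk continuous_fst)).measurable
      have hSmeas : MeasurableSet S := by
        have : S = (fun q : EuclideanSpace ℝ (Fin d) × EuclideanSpace ℝ (Fin d) =>
            dist q.2 q.1) ⁻¹' (Iic (r+δ)) \ (fun q => dist q.2 q.1) ⁻¹' (Iio (r-δ)) := by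
          ext q
          simp [hSdef, mem_Iic, mem_Iio]
        rw [this]
        exact (hdistm measurableSet_Iic).diff (hdistm measurableSet_Iio)
      have hFmeas : Measurable F :=
        (((hgmeas.comp measurable_snd).nnnorm.coe_nnreal_ennreal).pow_const 2).indicator hSmeas
      have hmemA : ∀ x y, y ∈ A x ↔ ((x, y) ∈ S) := fun x y => Iff.rfl
      have hFx : ∀ x, ∫⁻ y in A x, ((‖g y‖₊:ℝ≥0∞))^2 ∂volume = ∫⁻ y, F (x, y) ∂volume := by
        intro x
        rw [← lintegral_indicator (hAmeas x)]
        congr 1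
      simp only [hFx]
      rw [lintegral_lintegral_swap (f := fun x y => F (x, y)) hFmeas.aemeasurable]
      have hFy : ∀ y, ∫⁻ x, F (x, y) ∂volume = NA * ((‖g y‖₊:ℝ≥0∞))^2 := by
        intro y
        have hfun : (fun x => F (x, y))
            = Set.indicator (A y) (fun _ => ((‖g y‖₊:ℝ≥0∞))^2) := by
          funext x
          have hsym : ((x, y) ∈ S) ↔ x ∈ A y := by
            simp only [hSdef, Set.mem_setOf_eq, hAdef, mem_diff, mem_closedBall, mem_ball]
            rw [dist_comm]
          by_cases h : x ∈ A y
          · simp only [hFdef, Set.indicator_of_mem (hsym.2 h), Set.indicator_of_mem h]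
          · simp only [hFdef, Set.indicator_of_notMem (fun hc => h (hsym.1 hc)),
              Set.indicator_of_notMem h]
        rw [hfun, lintegral_indicator_const (hAmeas y), hNAx y, mul_comm]
      simp only [hFy]
      rw [lintegral_const_mul' _ _ hNAtop]
    -- geometric bound on NA
    have hNA_le : NA ≤ ENNReal.ofReal (C₀ * (2:ℝ)^(k-n)) * NB := by
      have hfr : Module.finrank ℝ (EuclideanSpace ℝ (Fin d)) = d := finrank_euclideanSpace_fin
      have hc : volume (closedBall (0:EuclideanSpace ℝ (Fin d)) (r+δ))
          = ENNReal.ofReal ((r+δ)^d) * volume (ball (0:EuclideanSpace ℝ (Fin d)) 1) := by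
        rw [Measure.addHaar_closedBall volume 0 (by positivity), hfr]
      set s : ℝ := max (r - δ) 0 with hs
      have hb : volume (ball (0:EuclideanSpace ℝ (Fin d)) (r-δ))
          = ENNReal.ofReal (s^d) * volume (ball (0:EuclideanSpace ℝ (Fin d)) 1) := by
        rcases le_or_gt (r-δ) 0 with h | h
        · rw [ball_eq_empty.2 h, measure_empty, hs, max_eq_right h, zero_pow hd.ne']
          simp
        · rw [hs, max_eq_left h.le, Measure.addHaar_ball volume 0 h.le, hfr]
      have hs0 : (0:ℝ) ≤ s := le_max_right _ _
      have hsle : s ≤ r + δ := max_le (by linarith) (by positivity)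
      have hq2 : (2:ℝ)^(-(n-1)) = 2 * ((2:ℝ)^(k-n) * r) := by
        rw [hrdef]
        have he : -(n-1) = 1 + (k - n + -k) := by ring
        rw [he, zpow_add₀ (two_ne_zero : (2:ℝ) ≠ 0), zpow_add₀ (two_ne_zero : (2:ℝ) ≠ 0),
          zpow_one]
      have hrd : r^d = r * r^(d-1) := by
        conv_lhs => rw [show d = (d-1)+1 from (Nat.succ_pred_eq_of_pos hd).symm]
        rw [pow_succ']
      have hreal : (r+δ)^d - s^d ≤ (C₀ * (2:ℝ)^(k-n)) * r^d := by
        have h1 : (r+δ)^d - s^d ≤ d * ((r+δ) - s) * (r+δ)^(d-1) :=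
          pow_sub_pow_le_real hs0 hsle d
        have h2 : (r+δ) - s ≤ 2*δ := by
          have := le_max_left (r-δ) (0:ℝ)
          rw [← hs] at this
          linarith
        have h3 : (r+δ)^(d-1) ≤ ((1+Real.sqrt d) * r)^(d-1) := by
          apply pow_le_pow_left₀ (by positivity)
          nlinarith [hδr, Real.sqrt_nonneg (d:ℝ)]
        calc (r+δ)^d - s^d ≤ d * ((r+δ) - s) * (r+δ)^(d-1) := h1
          _ ≤ d * (2*δ) * ((1+Real.sqrt d) * r)^(d-1) := by
              apply mul_le_mul _ h3 (by positivity) _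
              · exact mul_le_mul_of_nonneg_left h2 (Nat.cast_nonneg d)
              · positivity
          _ = (C₀ * (2:ℝ)^(k-n)) * r^d := by
              rw [mul_pow, hC₀, hδdef, hq2, hrd]
              ring
      calc NA = volume (closedBall (0:EuclideanSpace ℝ (Fin d)) (r+δ))
            - volume (ball (0:EuclideanSpace ℝ (Fin d)) (r-δ)) := by rw [hNAdef, hAvol 0]
        _ ≤ ENNReal.ofReal ((C₀ * (2:ℝ)^(k-n)) * r^d)
            * volume (ball (0:EuclideanSpace ℝ (Fin d)) 1) := by
            rw [hc, hb]
            apply tsub_le_iff_right.2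
            calc ENNReal.ofReal ((r+δ)^d) * volume (ball (0:EuclideanSpace ℝ (Fin d)) 1)
                ≤ (ENNReal.ofReal ((C₀ * (2:ℝ)^(k-n)) * r^d) + ENNReal.ofReal (s^d))
                  * volume (ball (0:EuclideanSpace ℝ (Fin d)) 1) := by
                  apply mul_le_mul_left
                  calc ENNReal.ofReal ((r+δ)^d)
                      ≤ ENNReal.ofReal ((C₀ * (2:ℝ)^(k-n)) * r^d + s^d) :=
                        ENNReal.ofReal_le_ofReal (by linarith)
                    _ ≤ _ := ENNReal.ofReal_add_le
              _ = ENNReal.ofReal ((C₀ * (2:ℝ)^(k-n)) * r^d)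
                    * volume (ball (0:EuclideanSpace ℝ (Fin d)) 1)
                  + ENNReal.ofReal (s^d) * volume (ball (0:EuclideanSpace ℝ (Fin d)) 1) :=
                  add_mul _ _ _
        _ = ENNReal.ofReal (C₀ * (2:ℝ)^(k-n)) * NB := by
            rw [hNBdef, Measure.addHaar_ball volume 0 hrpos.le, hfr,
              ENNReal.ofReal_mul (by positivity), mul_assoc]
    have hqbound : NB⁻¹ * NA ≤ ENNReal.ofReal (C₀ * (2:ℝ)^(k-n)) := by
      calc NB⁻¹ * NA ≤ NB⁻¹ * (ENNReal.ofReal (C₀ * (2:ℝ)^(k-n)) * NB) :=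
            mul_le_mul_right hNA_le _
        _ = ENNReal.ofReal (C₀ * (2:ℝ)^(k-n)) * (NB⁻¹ * NB) := by ring
        _ = ENNReal.ofReal (C₀ * (2:ℝ)^(k-n)) := by
            rw [ENNReal.inv_mul_cancel hNB0 hNBtop, mul_one]
    have hconst : NB⁻¹^2 * NA^2 ≤ ENNReal.ofReal (max 1 (C₀^2) * (2:ℝ)^(k-n)) := by
      calc NB⁻¹^2 * NA^2 = (NB⁻¹*NA)^2 := (mul_pow _ _ _).symm
        _ ≤ (ENNReal.ofReal (C₀ * (2:ℝ)^(k-n)))^2 := pow_le_pow_left' hqbound 2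
        _ = ENNReal.ofReal ((C₀ * (2:ℝ)^(k-n))^2) := (ENNReal.ofReal_pow (by positivity) 2).symm
        _ ≤ ENNReal.ofReal (max 1 (C₀^2) * (2:ℝ)^(k-n)) := by
            apply ENNReal.ofReal_le_ofReal
            have ht1 : ((2:ℝ)^(k-n)) ≤ 1 := zpow_le_one_of_nonpos₀ one_le_two (by omega)
            have ht0 : (0:ℝ) < (2:ℝ)^(k-n) := by positivity
            have hm : C₀^2 ≤ max 1 (C₀^2) := le_max_right _ _
            have hM0 : (0:ℝ) ≤ max 1 (C₀^2) := le_trans zero_le_one (le_max_left _ _)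
            have htt : (2:ℝ)^(k-n) * (2:ℝ)^(k-n) ≤ (2:ℝ)^(k-n) := by nlinarith
            nlinarith [mul_le_mul_of_nonneg_right hm (mul_pos ht0 ht0).le,
              mul_le_mul_of_nonneg_left htt hM0]
    -- final chain
    calc eLpNorm (fun x => ballAvg d k g x) 2 volume ^ 2
        = ∫⁻ x, ((‖ballAvg d k g x‖₊:ℝ≥0∞))^2 ∂volume := eLpNorm_two_sq volume _
      _ ≤ ∫⁻ x, NB⁻¹^2 * NA * ∫⁻ y in A x, ((‖g y‖₊:ℝ≥0∞))^2 ∂volume ∂volume :=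
          lintegral_mono hpt
      _ = NB⁻¹^2 * NA * ∫⁻ x, ∫⁻ y in A x, ((‖g y‖₊:ℝ≥0∞))^2 ∂volume ∂volume :=
          lintegral_const_mul' _ _
            (ENNReal.mul_ne_top (ENNReal.pow_ne_top (ENNReal.inv_ne_top.2 hNB0)) hNAtop)
      _ = NB⁻¹^2 * NA * (NA * ∫⁻ y, ((‖g y‖₊:ℝ≥0∞))^2 ∂volume) := by rw [hswap]
      _ = (NB⁻¹^2 * NA^2) * ∫⁻ y, ((‖g y‖₊:ℝ≥0∞))^2 ∂volume := by ring
      _ ≤ ENNReal.ofReal (max 1 (C₀^2) * (2:ℝ)^(k-n))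
            * ∫⁻ y, ((‖g y‖₊:ℝ≥0∞))^2 ∂volume := mul_le_mul_left hconst _
      _ = ENNReal.ofReal (max 1 (C₀^2) * (2:ℝ)^(k-n)) * eLpNorm g 2 volume ^ 2 := by
          rw [eLpNorm_two_sq volume g]
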